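/- For one-dimensional Gaussians P = N(m₀, σ₀²) and Q = N(m₁, σ₁²) with σ₀, σ₁ > 0, the squared 2-Wasserstein distance satisfies W₂(P,Q)² = (m₀ − m₁)² + (σ₀ − σ₁)². -/

import Mathlib

open MeasureTheory ProbabilityTheory


section WassersteinAux
open Real Filter
open scoped NNReal ENNReal

lemma integrable_sq_exp (b : ℝ) (hb : 0 < b) :
    Integrable (fun x : ℝ => x^2 * rexp (-b * x^2)) := by
  have hg : Integrable (fun x : ℝ => (2/b) * rexp (-(b/2) * x^2)) :=
    (integrable_exp_neg_mul_sq (by linarith)).const_mul _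
  refine hg.mono' ?_ ?_
  · exact ((measurable_id.pow_const 2).mul
      ((measurable_id.pow_const 2).const_mul (-b)).exp).aestronglyMeasurable
  · refine Filter.Eventually.of_forall fun x => ?_
    have h1 : (b/2) * x^2 ≤ rexp ((b/2) * x^2) := (Real.add_one_le_exp _).trans' (by linarith)
    have h2 : 0 < rexp ((b/2)*x^2) := Real.exp_pos _
    have h3 : rexp (-b * x^2) = rexp (-(b/2)*x^2) / rexp ((b/2)*x^2) := by
      rw [← Real.exp_sub]; ring_nf
    have h4 : x^2 ≤ (2/b) * rexp ((b/2)*x^2) := by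
      rw [div_mul_eq_mul_div, le_div_iff₀ (by linarith : (0:ℝ) < b)]; nlinarith
    rw [Real.norm_eq_abs, abs_of_nonneg (by positivity), h3, mul_div_assoc', div_le_iff₀ h2]
    nlinarith [Real.exp_pos (-(b/2)*x^2)]

lemma myderiv (b : ℝ) (hb : b ≠ 0) (x : ℝ) :
    HasDerivAt (fun x : ℝ => -(2*b)⁻¹ * rexp (-b * x^2)) (x * rexp (-b * x^2)) x := by
  have h1 : HasDerivAt (fun x : ℝ => -b * x^2) (-b * (2*x)) x := by
    simpa using ((hasDerivAt_pow 2 x).const_mul (-b))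
  have h2 := (h1.exp).const_mul (-(2*b)⁻¹)
  refine h2.congr_deriv ?_
  have h2b : (2*b)⁻¹ * (2*b) = 1 := inv_mul_cancel₀ (mul_ne_zero two_ne_zero hb)
  linear_combination (x * rexp (-b * x^2)) * h2b

lemma integral_lin_exp (b : ℝ) (hb : 0 < b) :
    ∫ x : ℝ, x * rexp (-b * x^2) = 0 := by
  refine integral_eq_zero_of_hasDerivAt_of_integrable (myderiv b hb.ne') ?_ ?_
  · exact integrable_mul_exp_neg_mul_sq hb
  · exact (integrable_exp_neg_mul_sq hb).const_mul _

lemma integral_sq_exp' (b : ℝ) (hb : 0 < b) :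
    ∫ x : ℝ, x^2 * rexp (-b * x^2) = (2*b)⁻¹ * √(π / b) := by
  have key := MeasureTheory.integral_mul_deriv_eq_deriv_mul_of_integrable
    (u := fun x : ℝ => x) (u' := fun _ => (1:ℝ))
    (v := fun x : ℝ => -(2*b)⁻¹ * rexp (-b * x^2)) (v' := fun x => x * rexp (-b * x^2))
    (fun x _ => hasDerivAt_id x) (fun x _ => myderiv b hb.ne' x)
    (by
      refine (integrable_sq_exp b hb).congr (Filter.Eventually.of_forall fun x => ?_)
      simp [Pi.mul_def]; ring)
    (by simpa [Pi.mul_def] using ((integrable_exp_neg_mul_sq hb).const_mul (-(2*b)⁻¹)))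
    (by
      have := (integrable_mul_exp_neg_mul_sq hb).const_mul (-(2*b)⁻¹)
      refine this.congr (Filter.Eventually.of_forall fun x => ?_)
      simp [Pi.mul_def]; ring)
  have e1 : ∫ x : ℝ, x * (x * rexp (-b * x^2)) = ∫ x : ℝ, x^2 * rexp (-b * x^2) := by
    congr 1; funext x; ring
  rw [e1] at key
  rw [key]
  rw [show (fun x : ℝ => (1:ℝ) * (-(2*b)⁻¹ * rexp (-b * x^2)))
      = fun x : ℝ => (-(2*b)⁻¹) * rexp (-b * x^2) from by funext x; ring]
  rw [integral_const_mul, integral_gaussian]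
  ring

lemma gaussian_integral_eq (m : ℝ) {v : ℝ≥0} (hv : v ≠ 0) (g : ℝ → ℝ) :
    ∫ x, g x ∂(gaussianReal m v) = ∫ x, gaussianPDFReal m v x * g x := by
  rw [gaussianReal_of_var_ne_zero _ hv]
  have hpdf : gaussianPDF m v = fun x => ((gaussianPDFReal m v x).toNNReal : ℝ≥0∞) := rfl
  rw [hpdf, integral_withDensity_eq_integral_smul
    ((measurable_gaussianPDFReal m v).real_toNNReal) g]
  congr 1
  funext x
  rw [NNReal.smul_def, Real.coe_toNNReal _ (gaussianPDFReal_nonneg m v x), smul_eq_mul]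

lemma gaussian_integrable_iff (m : ℝ) {v : ℝ≥0} (hv : v ≠ 0) (g : ℝ → ℝ) :
    Integrable g (gaussianReal m v) ↔
      Integrable (fun x => gaussianPDFReal m v x * g x) volume := by
  rw [gaussianReal_of_var_ne_zero _ hv]
  have hpdf : gaussianPDF m v = fun x => ((gaussianPDFReal m v x).toNNReal : ℝ≥0∞) := rfl
  rw [hpdf, integrable_withDensity_iff_integrable_smul
    ((measurable_gaussianPDFReal m v).real_toNNReal)]
  constructor <;> intro h <;> refine h.congr (Filter.Eventually.of_forall fun x => ?_)
  · show (gaussianPDFReal m v x).toNNReal • g x = gaussianPDFReal m v x * g x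
    rw [NNReal.smul_def, Real.coe_toNNReal _ (gaussianPDFReal_nonneg m v x), smul_eq_mul]
  · show gaussianPDFReal m v x * g x = (gaussianPDFReal m v x).toNNReal • g x
    rw [NNReal.smul_def, Real.coe_toNNReal _ (gaussianPDFReal_nonneg m v x), smul_eq_mul]

lemma pdf_zero_eq {v : ℝ≥0} (x : ℝ) :
    gaussianPDFReal 0 v x = (√(2 * π * v))⁻¹ * rexp (-(2 * (v:ℝ))⁻¹ * x ^ 2) := by
  rw [gaussianPDFReal]
  congr 1
  rw [sub_zero]
  congr 1
  rw [neg_div, neg_mul]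
  congr 1
  rw [div_eq_inv_mul]

lemma gaussian_integrable_id {v : ℝ≥0} (hv : v ≠ 0) :
    Integrable (fun x => x) (gaussianReal 0 v) := by
  rw [gaussian_integrable_iff 0 hv]
  have hb : (0:ℝ) < (2 * (v:ℝ))⁻¹ := by
    have : (0:ℝ) < v := lt_of_le_of_ne v.coe_nonneg (by exact_mod_cast (Ne.symm hv))
    positivity
  have := ((integrable_mul_exp_neg_mul_sq hb).const_mul (√(2 * π * v))⁻¹)
  refine this.congr (Filter.Eventually.of_forall fun x => ?_)
  simp only [pdf_zero_eq]; ring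

lemma gaussian_integrable_sq {v : ℝ≥0} (hv : v ≠ 0) :
    Integrable (fun x => x ^ 2) (gaussianReal 0 v) := by
  rw [gaussian_integrable_iff 0 hv]
  have hb : (0:ℝ) < (2 * (v:ℝ))⁻¹ := by
    have : (0:ℝ) < v := lt_of_le_of_ne v.coe_nonneg (by exact_mod_cast (Ne.symm hv))
    positivity
  have := ((integrable_sq_exp _ hb).const_mul (√(2 * π * v))⁻¹)
  refine this.congr (Filter.Eventually.of_forall fun x => ?_)
  simp only [pdf_zero_eq]; ring

lemma gaussian_integral_id {v : ℝ≥0} (hv : v ≠ 0) :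
    ∫ x, x ∂(gaussianReal 0 v) = 0 := by
  rw [gaussian_integral_eq 0 hv]
  have hb : (0:ℝ) < (2 * (v:ℝ))⁻¹ := by
    have : (0:ℝ) < v := lt_of_le_of_ne v.coe_nonneg (by exact_mod_cast (Ne.symm hv))
    positivity
  calc ∫ x, gaussianPDFReal 0 v x * x
      = ∫ x, (√(2 * π * v))⁻¹ * (x * rexp (-(2 * (v:ℝ))⁻¹ * x ^ 2)) := by
        congr 1; funext x; rw [pdf_zero_eq]; ring
    _ = (√(2 * π * v))⁻¹ * ∫ x, x * rexp (-(2 * (v:ℝ))⁻¹ * x ^ 2) := integral_const_mul _ _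
    _ = 0 := by rw [integral_lin_exp _ hb, mul_zero]

lemma gaussian_integral_sq {v : ℝ≥0} (hv : v ≠ 0) :
    ∫ x, x ^ 2 ∂(gaussianReal 0 v) = v := by
  rw [gaussian_integral_eq 0 hv]
  have hvpos : (0:ℝ) < v := lt_of_le_of_ne v.coe_nonneg (by exact_mod_cast (Ne.symm hv))
  have hb : (0:ℝ) < (2 * (v:ℝ))⁻¹ := by positivity
  calc ∫ x, gaussianPDFReal 0 v x * x ^ 2
      = ∫ x, (√(2 * π * v))⁻¹ * (x ^ 2 * rexp (-(2 * (v:ℝ))⁻¹ * x ^ 2)) := by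
        congr 1; funext x; rw [pdf_zero_eq]; ring
    _ = (√(2 * π * v))⁻¹ * ∫ x, x ^ 2 * rexp (-(2 * (v:ℝ))⁻¹ * x ^ 2) := integral_const_mul _ _
    _ = (√(2 * π * v))⁻¹ * ((2 * (2 * (v:ℝ))⁻¹)⁻¹ * √(π / (2 * (v:ℝ))⁻¹)) := by
        rw [integral_sq_exp' _ hb]
    _ = v := by
        rw [div_inv_eq_mul]
        have h2 : (2 * (2 * (v:ℝ))⁻¹)⁻¹ = v := by field_simp
        rw [h2, show π * (2 * (v:ℝ)) = 2 * π * v by ring]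
        have hs : (0:ℝ) < √(2 * π * v) := Real.sqrt_pos.mpr (by positivity)
        rw [← mul_assoc, mul_comm ((√(2 * π * (v:ℝ)))⁻¹) (v:ℝ), mul_assoc,
          inv_mul_cancel₀ hs.ne', mul_one]

lemma gaussianReal_eq_map (m : ℝ) (v : ℝ≥0) :
    gaussianReal m v = (gaussianReal 0 v).map (· + m) := by
  rw [gaussianReal_map_add_const, zero_add]

lemma integrable_centered (m : ℝ) {v : ℝ≥0} (hv : v ≠ 0) :
    Integrable (fun x => x - m) (gaussianReal m v) := by
  rw [gaussianReal_eq_map m v]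
  rw [integrable_map_measure ((measurable_id'.sub_const m).aestronglyMeasurable)
    (measurable_add_const m).aemeasurable]
  refine (gaussian_integrable_id hv).congr (Filter.Eventually.of_forall fun x => ?_)
  simp [Function.comp]

lemma integrable_centered_sq (m : ℝ) {v : ℝ≥0} (hv : v ≠ 0) :
    Integrable (fun x => (x - m) ^ 2) (gaussianReal m v) := by
  rw [gaussianReal_eq_map m v]
  rw [integrable_map_measure (((measurable_id'.sub_const m).pow_const 2).aestronglyMeasurable)
    (measurable_add_const m).aemeasurable]
  refine (gaussian_integrable_sq hv).congr (Filter.Eventually.of_forall fun x => ?_)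
  simp [Function.comp]

lemma integral_centered (m : ℝ) {v : ℝ≥0} (hv : v ≠ 0) :
    ∫ x, (x - m) ∂(gaussianReal m v) = 0 := by
  rw [gaussianReal_eq_map m v,
    integral_map (measurable_add_const m).aemeasurable
      ((measurable_id'.sub_const m).aestronglyMeasurable)]
  simp only [add_sub_cancel_right]
  exact gaussian_integral_id hv

lemma integral_centered_sq (m : ℝ) {v : ℝ≥0} (hv : v ≠ 0) :
    ∫ x, (x - m) ^ 2 ∂(gaussianReal m v) = v := by
  rw [gaussianReal_eq_map m v,
    integral_map (measurable_add_const m).aemeasurable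
      (((measurable_id'.sub_const m).pow_const 2).aestronglyMeasurable)]
  simp only [add_sub_cancel_right]
  exact gaussian_integral_sq hv

end WassersteinAux

open Real Filter
open scoped NNReal ENNReal

/-- The squared 2-Wasserstein distance between univariate Gaussians
`N(m₀, σ₀²)` and `N(m₁, σ₁²)` (defined as the infimum over couplings of the
expected squared distance) equals `(m₀ − m₁)² + (σ₀ − σ₁)²`. -/
theorem wasserstein2_sq_gaussianReal (m₀ m₁ : ℝ) (σ₀ σ₁ : NNReal)
    (h₀ : 0 < σ₀) (h₁ : 0 < σ₁) :
    sInf {r : ℝ | ∃ γ : Measure (ℝ × ℝ),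
        γ.map Prod.fst = gaussianReal m₀ (σ₀ ^ 2) ∧
        γ.map Prod.snd = gaussianReal m₁ (σ₁ ^ 2) ∧
        r = ∫ p, (p.1 - p.2) ^ 2 ∂γ} =
      (m₀ - m₁) ^ 2 + ((σ₀ : ℝ) - (σ₁ : ℝ)) ^ 2 := by
  have hσ₀ : (σ₀ : ℝ) ≠ 0 := by exact_mod_cast h₀.ne'
  have hσ₁ : (σ₁ : ℝ) ≠ 0 := by exact_mod_cast h₁.ne'
  have hσ₀pos : (0:ℝ) < σ₀ := by exact_mod_cast h₀
  have hσ₁pos : (0:ℝ) < σ₁ := by exact_mod_cast h₁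
  have hv₀ : (σ₀ ^ 2 : ℝ≥0) ≠ 0 := pow_ne_zero _ h₀.ne'
  have hv₁ : (σ₁ ^ 2 : ℝ≥0) ≠ 0 := pow_ne_zero _ h₁.ne'
  -- lower bound
  have hlb : ∀ r ∈ {r : ℝ | ∃ γ : Measure (ℝ × ℝ),
        γ.map Prod.fst = gaussianReal m₀ (σ₀ ^ 2) ∧
        γ.map Prod.snd = gaussianReal m₁ (σ₁ ^ 2) ∧
        r = ∫ p, (p.1 - p.2) ^ 2 ∂γ},
      (m₀ - m₁) ^ 2 + ((σ₀ : ℝ) - (σ₁ : ℝ)) ^ 2 ≤ r := by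
    rintro r ⟨γ, h1, h2, h3⟩
    have huniv : γ Set.univ = 1 := by
      have h := congrArg (fun μ : Measure ℝ => μ Set.univ) h1
      simpa [Measure.map_apply measurable_fst MeasurableSet.univ] using h
    haveI : IsProbabilityMeasure γ := ⟨huniv⟩
    -- integrability transfers
    have hF1 : Integrable (fun p : ℝ × ℝ => p.1 - m₀) γ := by
      have h := (integrable_map_measure ((measurable_id'.sub_const m₀).aestronglyMeasurable)
        measurable_fst.aemeasurable).mp (by rw [h1]; exact integrable_centered m₀ hv₀)
      exact h
    have hF2 : Integrable (fun p : ℝ × ℝ => (p.1 - m₀) ^ 2) γ := by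
      have h := (integrable_map_measure
        (((measurable_id'.sub_const m₀).pow_const 2).aestronglyMeasurable)
        measurable_fst.aemeasurable).mp (by rw [h1]; exact integrable_centered_sq m₀ hv₀)
      exact h
    have hG1 : Integrable (fun p : ℝ × ℝ => p.2 - m₁) γ := by
      have h := (integrable_map_measure ((measurable_id'.sub_const m₁).aestronglyMeasurable)
        measurable_snd.aemeasurable).mp (by rw [h2]; exact integrable_centered m₁ hv₁)
      exact h
    have hG2 : Integrable (fun p : ℝ × ℝ => (p.2 - m₁) ^ 2) γ := by
      have h := (integrable_map_measure
        (((measurable_id'.sub_const m₁).pow_const 2).aestronglyMeasurable)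
        measurable_snd.aemeasurable).mp (by rw [h2]; exact integrable_centered_sq m₁ hv₁)
      exact h
    -- moments
    have eF1 : ∫ p, (p.1 - m₀) ∂γ = 0 := by
      have h := integral_map (μ := γ) measurable_fst.aemeasurable
        ((measurable_id'.sub_const m₀).aestronglyMeasurable) (f := fun x => x - m₀)
      rw [h1, integral_centered m₀ hv₀] at h
      exact h.symm
    have eF2 : ∫ p, (p.1 - m₀) ^ 2 ∂γ = ((σ₀:ℝ) ^ 2) := by
      have h := integral_map (μ := γ) measurable_fst.aemeasurable
        (((measurable_id'.sub_const m₀).pow_const 2).aestronglyMeasurable)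
        (f := fun x => (x - m₀) ^ 2)
      rw [h1, integral_centered_sq m₀ hv₀] at h
      rw [← h]; push_cast; ring
    have eG1 : ∫ p, (p.2 - m₁) ∂γ = 0 := by
      have h := integral_map (μ := γ) measurable_snd.aemeasurable
        ((measurable_id'.sub_const m₁).aestronglyMeasurable) (f := fun x => x - m₁)
      rw [h2, integral_centered m₁ hv₁] at h
      exact h.symm
    have eG2 : ∫ p, (p.2 - m₁) ^ 2 ∂γ = ((σ₁:ℝ) ^ 2) := by
      have h := integral_map (μ := γ) measurable_snd.aemeasurable
        (((measurable_id'.sub_const m₁).pow_const 2).aestronglyMeasurable)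
        (f := fun x => (x - m₁) ^ 2)
      rw [h2, integral_centered_sq m₁ hv₁] at h
      rw [← h]; push_cast; ring
    -- product integrable
    have hFG : Integrable (fun p : ℝ × ℝ => (p.1 - m₀) * (p.2 - m₁)) γ := by
      have hbound : Integrable (fun p : ℝ × ℝ => ((p.1 - m₀) ^ 2 + (p.2 - m₁) ^ 2) / 2) γ :=
        (hF2.add hG2).div_const 2
      refine hbound.mono' ?_ ?_
      · exact ((measurable_fst.sub_const m₀).mul (measurable_snd.sub_const m₁)).aestronglyMeasurable
      · refine Filter.Eventually.of_forall fun p => ?_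
        rw [Real.norm_eq_abs, abs_mul]
        nlinarith [sq_nonneg (|p.1 - m₀| - |p.2 - m₁|), sq_abs (p.1 - m₀), sq_abs (p.2 - m₁),
          abs_nonneg (p.1 - m₀), abs_nonneg (p.2 - m₁)]
    -- Cauchy-Schwarz style bound
    have hI : ∫ p, (p.1 - m₀) * (p.2 - m₁) ∂γ ≤ (σ₀:ℝ) * σ₁ := by
      have ht : (0:ℝ) < (σ₁:ℝ) / σ₀ := by positivity
      set t : ℝ := (σ₁:ℝ) / σ₀ with htdef
      have hint : Integrable (fun p : ℝ × ℝ => (t * (p.1 - m₀) ^ 2 + (p.2 - m₁) ^ 2 / t) / 2) γ :=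
        ((hF2.const_mul t).add (hG2.div_const t)).div_const 2
      have hmono := integral_mono hFG hint (fun p => by
        have key : (t * (p.1 - m₀) ^ 2 + (p.2 - m₁) ^ 2 / t) / 2
            = (t ^ 2 * (p.1 - m₀) ^ 2 + (p.2 - m₁) ^ 2) / (2 * t) := by
          field_simp
        rw [key, le_div_iff₀ (by positivity)]
        nlinarith [sq_nonneg (t * (p.1 - m₀) - (p.2 - m₁))])
      refine hmono.trans ?_
      have hi1 : Integrable (fun p : ℝ × ℝ => t * (p.1 - m₀) ^ 2) γ := hF2.const_mul t
      have hi2 : Integrable (fun p : ℝ × ℝ => (p.2 - m₁) ^ 2 / t) γ := hG2.div_const t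
      rw [integral_div, integral_add hi1 hi2, integral_const_mul, integral_div, eF2, eG2]
      apply le_of_eq
      rw [htdef]
      field_simp
      ring
    -- expansion
    have hexp : (fun p : ℝ × ℝ => (p.1 - p.2) ^ 2) = fun p : ℝ × ℝ =>
        (p.1 - m₀) ^ 2 + (p.2 - m₁) ^ 2 + (m₀ - m₁) ^ 2 + (2 * (m₀ - m₁)) * (p.1 - m₀)
          + (-(2 * (m₀ - m₁))) * (p.2 - m₁) + (-2 : ℝ) * ((p.1 - m₀) * (p.2 - m₁)) := by
      funext p; ring
    have k2 : Integrable (fun p : ℝ × ℝ => (p.1 - m₀) ^ 2 + (p.2 - m₁) ^ 2) γ := hF2.add hG2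
    have k3 : Integrable (fun p : ℝ × ℝ => (p.1 - m₀) ^ 2 + (p.2 - m₁) ^ 2 + (m₀ - m₁) ^ 2) γ :=
      k2.add (integrable_const _)
    have k4 : Integrable (fun p : ℝ × ℝ => (p.1 - m₀) ^ 2 + (p.2 - m₁) ^ 2 + (m₀ - m₁) ^ 2
        + (2 * (m₀ - m₁)) * (p.1 - m₀)) γ := k3.add (hF1.const_mul _)
    have k5 : Integrable (fun p : ℝ × ℝ => (p.1 - m₀) ^ 2 + (p.2 - m₁) ^ 2 + (m₀ - m₁) ^ 2
        + (2 * (m₀ - m₁)) * (p.1 - m₀) + (-(2 * (m₀ - m₁))) * (p.2 - m₁)) γ :=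
      k4.add (hG1.const_mul _)
    have k6 : Integrable (fun p : ℝ × ℝ => (-2 : ℝ) * ((p.1 - m₀) * (p.2 - m₁))) γ :=
      hFG.const_mul _
    rw [h3, hexp,
      integral_add k5 k6,
      integral_add k4 (hG1.const_mul _),
      integral_add k3 (hF1.const_mul _),
      integral_add k2 (integrable_const _),
      integral_add hF2 hG2,
      integral_const_mul, integral_const_mul, integral_const_mul,
      eF1, eF2, eG1, eG2, integral_const]
    simp only [probReal_univ, measure_univ, ENNReal.toReal_one, smul_eq_mul, one_mul, mul_zero, add_zero]
    nlinarith [hI]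
  -- membership of the target value
  have hmem : ((m₀ - m₁) ^ 2 + ((σ₀ : ℝ) - (σ₁ : ℝ)) ^ 2) ∈ {r : ℝ | ∃ γ : Measure (ℝ × ℝ),
        γ.map Prod.fst = gaussianReal m₀ (σ₀ ^ 2) ∧
        γ.map Prod.snd = gaussianReal m₁ (σ₁ ^ 2) ∧
        r = ∫ p, (p.1 - p.2) ^ 2 ∂γ} := by
    set c : ℝ := (σ₁:ℝ) / σ₀ with hc
    set d : ℝ := m₁ - c * m₀ with hd
    have hT : Measurable (fun x : ℝ => (x, c * x + d)) :=
      measurable_id'.prodMk ((measurable_id'.const_mul c).add_const d)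
    refine ⟨(gaussianReal m₀ (σ₀ ^ 2)).map (fun x => (x, c * x + d)), ?_, ?_, ?_⟩
    · rw [Measure.map_map measurable_fst hT]
      have : (Prod.fst ∘ fun x : ℝ => (x, c * x + d)) = id := rfl
      rw [this, Measure.map_id]
    · rw [Measure.map_map measurable_snd hT]
      have h : (Prod.snd ∘ fun x : ℝ => (x, c * x + d)) = (· + d) ∘ (c * ·) := rfl
      rw [h, ← Measure.map_map (measurable_add_const d) (measurable_const_mul c),
        gaussianReal_map_const_mul c, gaussianReal_map_add_const d]
      congr 1
      · rw [hd]; ring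
      · apply NNReal.coe_injective
        push_cast
        rw [hc]
        field_simp
    · rw [integral_map (f := fun p : ℝ × ℝ => (p.1 - p.2) ^ 2) hT.aemeasurable
        (((measurable_fst.sub measurable_snd).pow_const 2).aestronglyMeasurable)]
      have hfun : (fun x : ℝ => ((x, c * x + d).1 - (x, c * x + d).2) ^ 2) = fun x : ℝ =>
          (1 - c) ^ 2 * (x - m₀) ^ 2 + (2 * (1 - c) * (m₀ - m₁)) * (x - m₀) + (m₀ - m₁) ^ 2 := by
        funext x
        simp only
        rw [hd]
        ring
      have j1 : Integrable (fun x : ℝ => (1 - c) ^ 2 * (x - m₀) ^ 2)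
          (gaussianReal m₀ (σ₀ ^ 2)) := (integrable_centered_sq m₀ hv₀).const_mul _
      have j2 : Integrable (fun x : ℝ => (2 * (1 - c) * (m₀ - m₁)) * (x - m₀))
          (gaussianReal m₀ (σ₀ ^ 2)) := (integrable_centered m₀ hv₀).const_mul _
      have j3 : Integrable (fun x : ℝ => (1 - c) ^ 2 * (x - m₀) ^ 2
          + (2 * (1 - c) * (m₀ - m₁)) * (x - m₀)) (gaussianReal m₀ (σ₀ ^ 2)) := j1.add j2
      rw [hfun,
        integral_add j3 (integrable_const _),
        integral_add j1 j2,
        integral_const_mul, integral_const_mul,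
        integral_centered m₀ hv₀, integral_centered_sq m₀ hv₀, integral_const]
      simp only [probReal_univ, measure_univ, ENNReal.toReal_one, smul_eq_mul, one_mul, mul_zero, add_zero]
      push_cast
      rw [hc]
      field_simp
      ring
  exact le_antisymm
    (csInf_le ⟨_, fun r hr => hlb r hr⟩ hmem)
    (le_csInf ⟨_, hmem⟩ hlb)
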